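/- For each prime p set f(p) := 1 + ((p³ − p²)/(p³ − 1)) · ((p² + 1)/p²) · (1/(p² − 1)). Then ζ(3)^{−1} · (Π_{q prime} f(q)) · Σ_{d1 ≥ 1} Σ_{d2 ≥ 1} (μ(d1·d2)/(d1²·d2²)) · Π_{p | d1·d2} [ ((p³ − p²)/(p³ − 1)) · (1/(1 − p^{−2})) · f(p)^{−1} ] = 6/π², where μ is the Möbius function, ζ is the Riemann zeta function, the double series converges absolutely, and the infinite product over primes converges. -/

import Mathlib

/-- `f(p) = 1 + ((p³ − p²)/(p³ − 1)) · ((p² + 1)/p²) · (1/(p² − 1))`. -/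
noncomputable def fFactor (p : ℕ) : ℝ :=
  1 + (((p : ℝ) ^ 3 - (p : ℝ) ^ 2) / ((p : ℝ) ^ 3 - 1)) *
        (((p : ℝ) ^ 2 + 1) / (p : ℝ) ^ 2) * (1 / ((p : ℝ) ^ 2 - 1))

/-- `ζ(3) = Σ_{n ≥ 1} n⁻³`. -/
noncomputable def zetaThree : ℝ := ∑' n : ℕ+, 1 / ((n : ℕ) : ℝ) ^ 3

/-- The general term
`μ(d1·d2)/(d1²·d2²) · Π_{p | d1·d2} [((p³ − p²)/(p³ − 1)) · (1/(1 − p⁻²)) · f(p)⁻¹]`. -/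
noncomputable def doubleTerm (d1 d2 : ℕ) : ℝ :=
  ((ArithmeticFunction.moebius (d1 * d2) : ℤ) : ℝ) / ((d1 : ℝ) ^ 2 * (d2 : ℝ) ^ 2) *
    ∏ p ∈ (d1 * d2).primeFactors,
      (((p : ℝ) ^ 3 - (p : ℝ) ^ 2) / ((p : ℝ) ^ 3 - 1)) *
        (1 / (1 - ((p : ℝ) ^ 2)⁻¹)) * (fFactor p)⁻¹

noncomputable def gp (p : ℕ) : ℝ :=
  (((p : ℝ) ^ 3 - (p : ℝ) ^ 2) / ((p : ℝ) ^ 3 - 1)) * (1 / (1 - ((p : ℝ) ^ 2)⁻¹)) *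
    (fFactor p)⁻¹

noncomputable def Fterm (n : ℕ) : ℝ :=
  ((ArithmeticFunction.moebius n : ℤ) : ℝ) / (n : ℝ) ^ 2 * ∏ p ∈ n.primeFactors, gp p

noncomputable def Tterm (n : ℕ) : ℝ := (n.divisors.card : ℝ) * Fterm n

section basic
variable {p : ℕ}

lemma two_le_real (hp : p.Prime) : (2 : ℝ) ≤ (p : ℝ) := by exact_mod_cast hp.two_le

lemma four_le_sq (hp : p.Prime) : (4 : ℝ) ≤ (p : ℝ) ^ 2 := by
  have hx := two_le_real hp; nlinarith

lemma eight_le_cube (hp : p.Prime) : (8 : ℝ) ≤ (p : ℝ) ^ 3 := by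
  have hx := two_le_real hp
  have h2 := four_le_sq hp
  nlinarith [mul_nonneg (sub_nonneg.2 hx) (sq_nonneg (p : ℝ))]

lemma fFactor_one_le (hp : p.Prime) : 1 ≤ fFactor p := by
  have hx := two_le_real hp
  have h2 := four_le_sq hp
  have h3 := eight_le_cube hp
  unfold fFactor
  have h1 : (0:ℝ) ≤ ((p : ℝ) ^ 3 - (p : ℝ) ^ 2) / ((p : ℝ) ^ 3 - 1) := by
    apply div_nonneg <;> nlinarith
  have h2' : (0:ℝ) ≤ ((p : ℝ) ^ 2 + 1) / (p : ℝ) ^ 2 := by positivity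
  have h3' : (0:ℝ) ≤ 1 / ((p : ℝ) ^ 2 - 1) := by
    apply div_nonneg; norm_num; nlinarith
  nlinarith [mul_nonneg (mul_nonneg h1 h2') h3']

lemma fFactor_pos (hp : p.Prime) : 0 < fFactor p := lt_of_lt_of_le one_pos (fFactor_one_le hp)

lemma fFactor_le (hp : p.Prime) : fFactor p ≤ 1 + 3 * ((p : ℝ) ^ 2)⁻¹ := by
  have hx := two_le_real hp
  have h2 := four_le_sq hp
  have h3 := eight_le_cube hp
  unfold fFactor
  have h1 : ((p : ℝ) ^ 3 - (p : ℝ) ^ 2) / ((p : ℝ) ^ 3 - 1) ≤ 1 := by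
    rw [div_le_one (by nlinarith)]; nlinarith
  have h1' : (0:ℝ) ≤ ((p : ℝ) ^ 3 - (p : ℝ) ^ 2) / ((p : ℝ) ^ 3 - 1) := by
    apply div_nonneg <;> nlinarith
  have key : (((p : ℝ) ^ 2 + 1) / (p : ℝ) ^ 2) * (1 / ((p : ℝ) ^ 2 - 1)) ≤ 3 * ((p:ℝ)^2)⁻¹ := by
    rw [div_mul_div_comm, mul_one, div_le_iff₀ (by nlinarith)]
    have hne : ((p:ℝ)^2) ≠ 0 := by positivity
    have : ((p:ℝ)^2)⁻¹ * ((p:ℝ)^2) = 1 := inv_mul_cancel₀ hne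
    nlinarith [this]
  have hbc : (0:ℝ) ≤ (((p : ℝ) ^ 2 + 1) / (p : ℝ) ^ 2) * (1 / ((p : ℝ) ^ 2 - 1)) := by
    apply mul_nonneg
    · positivity
    · apply div_nonneg; norm_num; nlinarith
  have step : (((p : ℝ) ^ 3 - (p : ℝ) ^ 2) / ((p : ℝ) ^ 3 - 1)) *
        (((p : ℝ) ^ 2 + 1) / (p : ℝ) ^ 2) * (1 / ((p : ℝ) ^ 2 - 1)) ≤
        (((p : ℝ) ^ 2 + 1) / (p : ℝ) ^ 2) * (1 / ((p : ℝ) ^ 2 - 1)) := by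
    rw [mul_assoc]
    exact mul_le_of_le_one_left hbc h1
  linarith

lemma one_sub_inv_sq_pos (hp : p.Prime) : (0:ℝ) < 1 - ((p : ℝ) ^ 2)⁻¹ := by
  have h2 := four_le_sq hp
  have : ((p:ℝ)^2)⁻¹ ≤ 4⁻¹ := by
    apply inv_anti₀ <;> norm_num
    exact h2
  linarith

lemma gp_nonneg (hp : p.Prime) : 0 ≤ gp p := by
  have hx := two_le_real hp
  have h2 := four_le_sq hp
  have h3 := eight_le_cube hp
  unfold gp
  have h1 : (0:ℝ) ≤ ((p : ℝ) ^ 3 - (p : ℝ) ^ 2) / ((p : ℝ) ^ 3 - 1) := by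
    apply div_nonneg <;> nlinarith
  have h2' := (one_sub_inv_sq_pos hp)
  have h3' := (fFactor_pos hp).le
  positivity

lemma gp_le_one (hp : p.Prime) : gp p ≤ 1 := by
  have hx := two_le_real hp
  have h2 := four_le_sq hp
  have h3 := eight_le_cube hp
  have hf := fFactor_pos hp
  have hx2 : (0:ℝ) < (p:ℝ)^2 := by positivity
  have hx21 : (0:ℝ) < (p:ℝ)^2 - 1 := by nlinarith
  have hx31 : (0:ℝ) < (p:ℝ)^3 - 1 := by nlinarith
  have hinv : 1 - ((p : ℝ) ^ 2)⁻¹ = ((p:ℝ)^2 - 1) / (p:ℝ)^2 := by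
    field_simp
  unfold gp
  rw [hinv, mul_inv_le_iff₀ hf, one_mul]
  unfold fFactor
  rw [one_div_div]
  set x : ℝ := (p:ℝ)
  rw [div_mul_div_comm, div_le_iff₀ (by positivity)]
  have hx2ne : x ^ 2 ≠ 0 := by positivity
  have hx21ne : x ^ 2 - 1 ≠ 0 := ne_of_gt hx21
  have hx31ne : x ^ 3 - 1 ≠ 0 := ne_of_gt hx31
  rw [add_mul, one_mul]
  have hAD : (x ^ 3 - x ^ 2) / (x ^ 3 - 1) * ((x ^ 2 + 1) / x ^ 2) * (1 / (x ^ 2 - 1)) *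
      ((x ^ 3 - 1) * (x ^ 2 - 1)) = (x - 1) * (x ^ 2 + 1) := by
    field_simp
  rw [hAD]
  nlinarith [hx, h2, h3, sq_nonneg x, mul_pos hx2 hx21, mul_pos hx31 hx21]
end basic

lemma Fterm_zero : Fterm 0 = 0 := by simp [Fterm]

lemma Fterm_one : Fterm 1 = 1 := by simp [Fterm]

lemma Tterm_zero : Tterm 0 = 0 := by simp [Tterm, Fterm_zero]

lemma Tterm_one : Tterm 1 = 1 := by simp [Tterm, Fterm_one]

lemma Fterm_mul {m n : ℕ} (h : m.Coprime n) : Fterm (m * n) = Fterm m * Fterm n := by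
  rcases eq_or_ne m 0 with rfl | hm
  · rw [Nat.coprime_zero_left] at h
    subst h
    simp [Fterm_zero, Fterm_one]
  rcases eq_or_ne n 0 with rfl | hn
  · rw [Nat.coprime_zero_right] at h
    subst h
    simp [Fterm_zero, Fterm_one]
  unfold Fterm
  rw [ArithmeticFunction.isMultiplicative_moebius.map_mul_of_coprime h,
    Nat.primeFactors_mul hm hn, Finset.prod_union (Nat.Coprime.disjoint_primeFactors h)]
  push_cast
  ring

lemma Tterm_mul {m n : ℕ} (h : m.Coprime n) : Tterm (m * n) = Tterm m * Tterm n := by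
  rcases eq_or_ne m 0 with rfl | hm
  · rw [Nat.coprime_zero_left] at h
    subst h
    simp [Tterm_zero, Tterm_one]
  rcases eq_or_ne n 0 with rfl | hn
  · rw [Nat.coprime_zero_right] at h
    subst h
    simp [Tterm_zero, Tterm_one]
  unfold Tterm
  rw [Fterm_mul h, Nat.Coprime.card_divisors_mul h]
  push_cast
  ring

lemma prod_gp_nonneg (m : ℕ) : 0 ≤ ∏ p ∈ m.primeFactors, gp p :=
  Finset.prod_nonneg fun p hp => gp_nonneg (Nat.prime_of_mem_primeFactors hp)

lemma Fterm_abs_le (m : ℕ) : |Fterm m| ≤ (m : ℝ) ^ (-(3/2) : ℝ) := by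
  rcases eq_or_ne m 0 with rfl | hm
  · simp [Fterm_zero, Real.zero_rpow (by norm_num : (-(3/2) : ℝ) ≠ 0)]
  by_cases hsq : Squarefree m
  case neg =>
    unfold Fterm
    rw [ArithmeticFunction.moebius_eq_zero_of_not_squarefree hsq]
    simp only [Int.cast_zero, zero_div, zero_mul, abs_zero]
    positivity
  have hm0 : (0:ℝ) < (m : ℝ) := by positivity
  have habs : |Fterm m| = 1 / (m : ℝ) ^ 2 * ∏ p ∈ m.primeFactors, gp p := by
    unfold Fterm
    rw [abs_mul, abs_of_nonneg (prod_gp_nonneg m), abs_div]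
    congr 2
    · rw [← Int.cast_abs, ArithmeticFunction.abs_moebius_eq_one_of_squarefree hsq,
        Int.cast_one]
    · exact abs_of_nonneg (by positivity)
  rw [habs]
  have hprod : ∏ p ∈ m.primeFactors, gp p ≤ (m : ℝ) ^ ((1/2 : ℝ)) := by
    have h1 : ∏ p ∈ m.primeFactors, gp p ≤ ∏ p ∈ m.primeFactors, ((p:ℝ)) ^ ((1/2 : ℝ)) := by
      apply Finset.prod_le_prod
      · exact fun p hp => gp_nonneg (Nat.prime_of_mem_primeFactors hp)
      · intro p hp
        have hp' := Nat.prime_of_mem_primeFactors hp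
        exact le_trans (gp_le_one hp')
          (Real.one_le_rpow (by exact_mod_cast hp'.one_lt.le) (by norm_num))
    have h2 : ∏ p ∈ m.primeFactors, ((p:ℝ)) ^ ((1/2 : ℝ)) = (m : ℝ) ^ ((1/2 : ℝ)) := by
      rw [Real.finset_prod_rpow m.primeFactors _ (fun p _ => by positivity) (1/2 : ℝ)]
      congr 1
      rw [← Nat.cast_prod]
      congr 1
      exact Nat.prod_primeFactors_of_squarefree hsq
    rw [h2] at h1
    exact h1
  have hrw : (m : ℝ) ^ (-(3/2) : ℝ) = 1 / (m:ℝ) ^ 2 * (m : ℝ) ^ ((1/2 : ℝ)) := by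
    rw [show (-(3/2) : ℝ) = (1/2 : ℝ) - 2 by norm_num, Real.rpow_sub hm0]
    rw [show ((2:ℝ)) = ((2:ℕ):ℝ) by norm_num, Real.rpow_natCast]
    ring
  rw [hrw]
  gcongr

noncomputable def Bp (p : ℕ) : ℝ := (1 - ((p : ℝ) ^ 2)⁻¹) * (1 - ((p : ℝ) ^ 3)⁻¹)⁻¹

lemma card_antidiag (n : ℕ) : n.divisorsAntidiagonal.card = n.divisors.card := by
  rw [← Nat.image_fst_divisorsAntidiagonal, Finset.card_image_of_injOn]
  intro d hd e he h
  have hd' := (Nat.mem_divisorsAntidiagonal.mp hd)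
  have he' := (Nat.mem_divisorsAntidiagonal.mp he)
  have hd1 : d.1 ≠ 0 := by
    rintro h0
    exact hd'.2 (by rw [← hd'.1, h0, zero_mul])
  refine Prod.ext h ?_
  have : d.1 * d.2 = d.1 * e.2 := by
    rw [hd'.1, show (d.1 : ℕ) = e.1 from h, he'.1]
  exact Nat.eq_of_mul_eq_mul_left (Nat.pos_of_ne_zero hd1) this

lemma fiber_tsum (G : ℕ → ℝ) (hG0 : G 0 = 0) (n : ℕ) :
    ∑' d : ((fun d : ℕ × ℕ => d.1 * d.2) ⁻¹' {n}), G (d.1.1 * d.1.2) =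
      (n.divisors.card : ℝ) * G n := by
  rcases eq_or_ne n 0 with rfl | hn
  · have hz : ∀ d : ((fun d : ℕ × ℕ => d.1 * d.2) ⁻¹' {(0:ℕ)}), G (d.1.1 * d.1.2) = 0 := by
      rintro ⟨d, hd⟩
      have : d.1 * d.2 = 0 := hd
      simp only [this, hG0]
    rw [tsum_congr hz, tsum_zero]
    simp
  · have hset : ((fun d : ℕ × ℕ => d.1 * d.2) ⁻¹' {n}) = ↑(n.divisorsAntidiagonal) := by
      ext d
      simp [Nat.mem_divisorsAntidiagonal, hn]
    rw [hset, Finset.tsum_subtype' n.divisorsAntidiagonal (fun d => G (d.1 * d.2))]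
    rw [Finset.sum_congr rfl (fun d hd => by
      rw [(Nat.mem_divisorsAntidiagonal.mp hd).1])]
    rw [Finset.sum_const, nsmul_eq_mul, card_antidiag]

lemma summable_pairs : Summable (fun d : ℕ × ℕ => |Fterm (d.1 * d.2)|) := by
  have hmaj : Summable (fun d : ℕ × ℕ => ((d.1 : ℝ) ^ (-(3/2) : ℝ)) * ((d.2 : ℝ) ^ (-(3/2) : ℝ))) := by
    have hs : Summable (fun n : ℕ => (n : ℝ) ^ (-(3/2) : ℝ)) :=
      Real.summable_nat_rpow.mpr (by norm_num)
    exact hs.mul_of_nonneg hs (fun n => Real.rpow_nonneg (by positivity) _)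
      (fun n => Real.rpow_nonneg (by positivity) _)
  refine Summable.of_nonneg_of_le (fun d => abs_nonneg _) (fun d => ?_) hmaj
  calc |Fterm (d.1 * d.2)| ≤ ((d.1 * d.2 : ℕ) : ℝ) ^ (-(3/2) : ℝ) := Fterm_abs_le _
    _ = ((d.1 : ℝ) * (d.2 : ℝ)) ^ (-(3/2) : ℝ) := by push_cast; ring_nf
    _ = ((d.1 : ℝ) ^ (-(3/2) : ℝ)) * ((d.2 : ℝ) ^ (-(3/2) : ℝ)) :=
        Real.mul_rpow (by positivity) (by positivity)

lemma summable_T_norm : Summable (fun n : ℕ => ‖Tterm n‖) := by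
  have h1 := (summable_pairs.hasSum.tsum_fiberwise (fun d => d.1 * d.2)).summable
  refine h1.congr fun n => ?_
  rw [fiber_tsum (fun m => |Fterm m|) (by simp [Fterm_zero]) n]
  rw [Real.norm_eq_abs, Tterm, abs_mul, abs_of_nonneg (by positivity : (0:ℝ) ≤ (n.divisors.card : ℝ))]

lemma hasSum_T : HasSum Tterm (∑' d : ℕ × ℕ, Fterm (d.1 * d.2)) := by
  have h1 := (summable_pairs.of_abs.hasSum.tsum_fiberwise (fun d => d.1 * d.2))
  have heq : (fun n : ℕ => ∑' d : ((fun d : ℕ × ℕ => d.1 * d.2) ⁻¹' {n}), Fterm (d.1.1 * d.1.2))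
      = Tterm := by
    funext n
    rw [fiber_tsum Fterm Fterm_zero n]
    rfl
  rw [← heq]
  exact h1

lemma not_squarefree_pow {p e : ℕ} (hp : p.Prime) (he : 2 ≤ e) : ¬ Squarefree (p ^ e) := by
  intro h
  have : p * p ∣ p ^ e := by
    have : p ^ 2 ∣ p ^ e := pow_dvd_pow p he
    simpa [sq] using this
  exact hp.one_lt.ne' (Nat.isUnit_iff.mp (h p this))

lemma Tterm_prime_pow {p : ℕ} (hp : p.Prime) :
    ∑' e : ℕ, Tterm (p ^ e) = 1 + Tterm p := by
  rw [tsum_eq_sum (s := {0, 1}) (fun e he => ?_)]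
  · rw [Finset.sum_pair (by norm_num : (0:ℕ) ≠ 1), pow_zero, pow_one, Tterm_one]
  · simp only [Finset.mem_insert, Finset.mem_singleton] at he
    push_neg at he
    have h2 : 2 ≤ e := by omega
    unfold Tterm Fterm
    rw [ArithmeticFunction.moebius_eq_zero_of_not_squarefree (not_squarefree_pow hp h2)]
    simp

lemma Tterm_prime {p : ℕ} (hp : p.Prime) :
    Tterm p = 2 * (-1) / ((p : ℝ) ^ 2) * gp p := by
  unfold Tterm Fterm
  rw [ArithmeticFunction.moebius_apply_prime hp, hp.primeFactors, Finset.prod_singleton,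
    Nat.Prime.divisors hp]
  rw [Finset.card_insert_of_notMem (by simp [hp.one_lt.ne]), Finset.card_singleton]
  push_cast
  ring

lemma one_add_Tterm {p : ℕ} (hp : p.Prime) :
    1 + Tterm p = Bp p / fFactor p := by
  have hx := two_le_real hp
  have h2 := four_le_sq hp
  have h3 := eight_le_cube hp
  have hf := fFactor_pos hp
  have hfne : fFactor p ≠ 0 := ne_of_gt hf
  have hx2 : ((p:ℝ)^2) ≠ 0 := by positivity
  have hx3 : ((p:ℝ)^3) ≠ 0 := by positivity
  have h12' : (0:ℝ) < 1 - ((p:ℝ)^2)⁻¹ := by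
    have h4 : ((p:ℝ)^2)⁻¹ ≤ 4⁻¹ := inv_anti₀ (by norm_num) h2
    linarith
  have h13' : (0:ℝ) < 1 - ((p:ℝ)^3)⁻¹ := by
    have h8 : ((p:ℝ)^3)⁻¹ ≤ 8⁻¹ := inv_anti₀ (by norm_num) h3
    linarith
  have h12 : 1 - ((p:ℝ)^2)⁻¹ ≠ 0 := ne_of_gt h12'
  have h13 : 1 - ((p:ℝ)^3)⁻¹ ≠ 0 := ne_of_gt h13'
  have hx21 : ((p:ℝ)^2) - 1 ≠ 0 := by nlinarith
  have hx31 : ((p:ℝ)^3) - 1 ≠ 0 := by nlinarith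
  rw [Tterm_prime hp]
  unfold gp
  have hstep : 1 + 2 * (-1) / ((p:ℝ)^2) *
      ((((p:ℝ)^3 - (p:ℝ)^2)/((p:ℝ)^3 - 1)) * (1/(1 - ((p:ℝ)^2)⁻¹)) * (fFactor p)⁻¹)
      = (fFactor p - 2 * ((((p:ℝ)^3 - (p:ℝ)^2)/((p:ℝ)^3 - 1)) * (1/(1 - ((p:ℝ)^2)⁻¹))) /
          ((p:ℝ)^2)) / fFactor p := by
    field_simp
    ring
  rw [hstep]
  congr 1
  unfold fFactor Bp
  field_simp
  ring

/-- completely multiplicative `n ↦ (n²)⁻¹` -/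
noncomputable def z2hom : ℕ →*₀ ℝ where
  toFun n := ((n : ℝ) ^ 2)⁻¹
  map_zero' := by norm_num
  map_one' := by norm_num
  map_mul' m n := by push_cast; rw [mul_pow, mul_inv]

noncomputable def z3hom : ℕ →*₀ ℝ where
  toFun n := ((n : ℝ) ^ 3)⁻¹
  map_zero' := by norm_num
  map_one' := by norm_num
  map_mul' m n := by push_cast; rw [mul_pow, mul_inv]

lemma z2_summable : Summable (fun n : ℕ => ‖z2hom n‖) := by
  refine (Real.summable_one_div_nat_pow.mpr (le_refl 2)).congr fun n => ?_
  simp [z2hom, Real.norm_eq_abs, abs_of_nonneg, one_div]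

lemma z3_summable : Summable (fun n : ℕ => ‖z3hom n‖) := by
  refine (Real.summable_one_div_nat_pow.mpr (by norm_num : 2 ≤ 3)).congr fun n => ?_
  simp [z3hom, Real.norm_eq_abs, abs_of_nonneg, one_div]

lemma z2_tsum : ∑' n : ℕ, z2hom n = Real.pi ^ 2 / 6 := by
  rw [← hasSum_zeta_two.tsum_eq]
  exact tsum_congr fun n => by simp [z2hom, one_div]

lemma z3_tsum_eq_zetaThree : ∑' n : ℕ, z3hom n = zetaThree := by
  unfold zetaThree
  rw [← Function.Injective.tsum_eq (f := fun n : ℕ => z3hom n) PNat.coe_injective ?_]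
  · exact tsum_congr fun n => by simp [z3hom, one_div]
  · intro n hn
    have : n ≠ 0 := by
      intro h
      apply hn
      simp [h, z3hom]
    exact ⟨⟨n, Nat.pos_of_ne_zero this⟩, rfl⟩

lemma zetaThree_pos : 0 < zetaThree := by
  rw [← z3_tsum_eq_zetaThree]
  have h1 : z3hom 1 ≤ ∑' n : ℕ, z3hom n := by
    apply Summable.le_tsum (z3_summable.of_norm) 1
    intro j _
    simp only [z3hom, MonoidWithZeroHom.coe_mk, ZeroHom.coe_mk]
    positivity
  have : z3hom 1 = 1 := by simp [z3hom]
  linarith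

lemma multipliable_fFactor : Multipliable (fun q : Nat.Primes => fFactor (q : ℕ)) := by
  have hlog : Summable (fun q : Nat.Primes => Real.log (fFactor (q : ℕ))) := by
    have hmaj : Summable (fun q : Nat.Primes => 3 * (((q : ℕ) : ℝ) ^ 2)⁻¹) := by
      have : Summable (fun n : ℕ => 3 * ((n : ℝ) ^ 2)⁻¹) := by
        refine ((Real.summable_one_div_nat_pow.mpr (le_refl 2)).mul_left 3).congr fun n => ?_
        rw [one_div]
      exact this.comp_injective Nat.Primes.coe_nat_injective
    refine Summable.of_nonneg_of_le (fun q => Real.log_nonneg (fFactor_one_le q.prop))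
      (fun q => ?_) hmaj
    have h1 := Real.log_le_sub_one_of_pos (fFactor_pos q.prop)
    have h2 := fFactor_le q.prop
    linarith
  exact Real.multipliable_of_summable_log (fun q => fFactor_pos q.prop) hlog

lemma doubleTerm_eq (d1 d2 : ℕ) : doubleTerm d1 d2 = Fterm (d1 * d2) := by
  unfold doubleTerm Fterm gp
  rw [Nat.cast_mul, mul_pow]

lemma one_sub_inv_sq_ne {p : ℕ} (hp : p.Prime) : (1 : ℝ) - ((p : ℝ) ^ 2)⁻¹ ≠ 0 := by
  have h4 : ((p:ℝ)^2)⁻¹ ≤ 4⁻¹ := inv_anti₀ (by norm_num) (four_le_sq hp)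
  intro h
  rw [sub_eq_zero] at h
  rw [← h] at h4
  norm_num at h4

/-- `ζ(3)⁻¹ · (Π_q f(q)) · Σ_{d1,d2 ≥ 1} μ(d1 d2)/(d1² d2²) Π_{p | d1 d2}
  [((p³ − p²)/(p³ − 1)) (1 − p⁻²)⁻¹ f(p)⁻¹] = 6/π²`,
where the double series converges absolutely and the infinite product converges. -/
theorem stmt17 :
    Summable (fun d : ℕ+ × ℕ+ => |doubleTerm d.1 d.2|) ∧
    Multipliable (fun q : Nat.Primes => fFactor (q : ℕ)) ∧
    zetaThree⁻¹ * (∏' q : Nat.Primes, fFactor (q : ℕ)) *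
        (∑' d : ℕ+ × ℕ+, doubleTerm d.1 d.2) = 6 / Real.pi ^ 2 := by
  have hinj : Function.Injective
      (Prod.map (fun n : ℕ+ => (n : ℕ)) (fun n : ℕ+ => (n : ℕ))) :=
    Function.Injective.prodMap PNat.coe_injective PNat.coe_injective
  constructor
  · have hDF : (fun d : ℕ+ × ℕ+ => |doubleTerm (d.1 : ℕ) (d.2 : ℕ)|) =
        (fun d : ℕ × ℕ => |Fterm (d.1 * d.2)|) ∘
          (Prod.map (fun n : ℕ+ => (n : ℕ)) (fun n : ℕ+ => (n : ℕ))) := by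
      funext d
      simp [doubleTerm_eq, Prod.map]
    rw [hDF]
    exact summable_pairs.comp_injective hinj
  refine ⟨multipliable_fFactor, ?_⟩
  set S : ℝ := ∑' d : ℕ × ℕ, Fterm (d.1 * d.2) with hS
  set P : ℝ := ∏' q : Nat.Primes, fFactor (q : ℕ) with hP
  have hsupp : Function.support (fun d : ℕ × ℕ => Fterm (d.1 * d.2)) ⊆
      Set.range (Prod.map (fun n : ℕ+ => (n : ℕ)) (fun n : ℕ+ => (n : ℕ))) := by
    rintro ⟨d1, d2⟩ hd
    simp only [Function.mem_support] at hd
    have h0 : d1 * d2 ≠ 0 := by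
      intro h
      apply hd
      rw [h, Fterm_zero]
    have h1 : d1 ≠ 0 := fun h => h0 (by rw [h, zero_mul])
    have h2 : d2 ≠ 0 := fun h => h0 (by rw [h, mul_zero])
    exact ⟨(⟨d1, Nat.pos_of_ne_zero h1⟩, ⟨d2, Nat.pos_of_ne_zero h2⟩), rfl⟩
  have hts : ∑' d : ℕ+ × ℕ+, doubleTerm (d.1 : ℕ) (d.2 : ℕ) = S := by
    rw [hS, ← Function.Injective.tsum_eq hinj hsupp]
    exact tsum_congr fun d => doubleTerm_eq _ _
  have hEuler := EulerProduct.eulerProduct_hasProd Tterm_one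
    (fun {m n} h => Tterm_mul h) summable_T_norm Tterm_zero
  rw [hasSum_T.tsum_eq, ← hS] at hEuler
  have hfn : (fun p : Nat.Primes => ∑' e : ℕ, Tterm ((p : ℕ) ^ e)) =
      fun p : Nat.Primes => Bp (p : ℕ) / fFactor (p : ℕ) := by
    funext p
    rw [Tterm_prime_pow p.prop, one_add_Tterm p.prop]
  rw [hfn] at hEuler
  have hPf := multipliable_fFactor.hasProd
  rw [← hP] at hPf
  have hB : HasProd (fun p : Nat.Primes => Bp (p : ℕ)) (P * S) := by
    have hmul := hPf.mul hEuler
    have hfe : (fun p : Nat.Primes => fFactor (p : ℕ) * (Bp (p : ℕ) / fFactor (p : ℕ))) =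
        fun p : Nat.Primes => Bp (p : ℕ) := by
      funext p
      rw [mul_comm, div_mul_cancel₀ _ (ne_of_gt (fFactor_pos p.prop))]
    rwa [hfe] at hmul
  have hZ2 := EulerProduct.eulerProduct_completely_multiplicative_hasProd z2_summable
  have hZ3 := EulerProduct.eulerProduct_completely_multiplicative_hasProd z3_summable
  have hBZ2 := hB.mul hZ2
  have hfe2 : (fun p : Nat.Primes => Bp (p : ℕ) * (1 - z2hom (p : ℕ))⁻¹) =
      fun p : Nat.Primes => (1 - z3hom (p : ℕ))⁻¹ := by
    funext p
    have h12 := one_sub_inv_sq_ne p.prop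
    show Bp (p : ℕ) * (1 - z2hom (p : ℕ))⁻¹ = (1 - z3hom (p : ℕ))⁻¹
    simp only [z2hom, z3hom, MonoidWithZeroHom.coe_mk, ZeroHom.coe_mk]
    unfold Bp
    rw [mul_right_comm, mul_inv_cancel₀ h12, one_mul]
  rw [hfe2] at hBZ2
  have huniq : P * S * ∑' n : ℕ, z2hom n = ∑' n : ℕ, z3hom n := HasProd.unique hBZ2 hZ3
  rw [z2_tsum, z3_tsum_eq_zetaThree] at huniq
  have hPS : P * S ≠ 0 := by
    intro h
    apply ne_of_gt zetaThree_pos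
    rw [← huniq, h, zero_mul]
  rw [hts, ← huniq]
  have hpi : Real.pi ≠ 0 := Real.pi_ne_zero
  have hP0 : P ≠ 0 := left_ne_zero_of_mul hPS
  have hS0 : S ≠ 0 := right_ne_zero_of_mul hPS
  field_simp
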